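/- Let (R, 𝔪) be a local ring with 𝔪 nilpotent, and let M be an R-module. Then M is flat over R if and only if the natural multiplication map 𝔪 ⊗_R M → M is injective. -/

import Mathlib

open TensorProduct

section Aux

variable {R : Type*} [CommRing R] (I : Ideal R)

/-- The multiplication map `I ⊗ N → N`. -/
noncomputable abbrev stmt8.mulMap (N : Type*) [AddCommGroup N] [Module R N] :
    I ⊗[R] N →ₗ[R] N :=
  TensorProduct.lift ((LinearMap.lsmul R N).comp I.subtype)

lemma stmt8.mulMap_range (N : Type*) [AddCommGroup N] [Module R N] :
    LinearMap.range (stmt8.mulMap I N) = I • (⊤ : Submodule R N) := by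
  apply le_antisymm
  · rintro _ ⟨t, rfl⟩
    induction t with
    | zero => simp
    | tmul a n =>
      simpa using Submodule.smul_mem_smul a.2 (Submodule.mem_top (x := n))
    | add x y hx hy => rw [map_add]; exact Submodule.add_mem _ hx hy
  · refine Submodule.smul_le.2 fun r hr n _ => ⟨⟨r, hr⟩ ⊗ₜ n, by simp⟩

lemma stmt8.mulMap_natural {N P : Type*} [AddCommGroup N] [Module R N]
    [AddCommGroup P] [Module R P] (f : N →ₗ[R] P) :
    (stmt8.mulMap I P) ∘ₗ LinearMap.lTensor I f = f ∘ₗ stmt8.mulMap I N := by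
  ext a n
  simp

lemma stmt8.nak_bot {M : Type*} [AddCommGroup M] [Module R M]
    (hI : IsNilpotent I) (p : Submodule R M) (h : p ≤ I • p) : p = ⊥ := by
  obtain ⟨n, hn⟩ := hI
  have key : ∀ k, p ≤ I ^ k • p := by
    intro k
    induction k with
    | zero => simp [Ideal.one_eq_top]
    | succ k ih =>
      calc p ≤ I • p := h
        _ ≤ I • (I ^ k • p) := Submodule.smul_mono le_rfl ih
        _ = (I • I ^ k) • p := (Submodule.smul_assoc _ _ _).symm
        _ = I ^ (k + 1) • p := by rw [smul_eq_mul, ← pow_succ']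
  have hp := key n
  rw [hn] at hp
  simpa using le_bot_iff.mp (by simpa using hp)

lemma stmt8.nak_top {M : Type*} [AddCommGroup M] [Module R M]
    (hI : IsNilpotent I) (p : Submodule R M)
    (h : p ⊔ I • (⊤ : Submodule R M) = ⊤) : p = ⊤ := by
  obtain ⟨n, hn⟩ := hI
  have key : ∀ k, (⊤ : Submodule R M) ≤ p ⊔ I ^ k • (⊤ : Submodule R M) := by
    intro k
    induction k with
    | zero => simp [Ideal.one_eq_top]
    | succ k ih =>
      have : I • (⊤ : Submodule R M) ≤ p ⊔ I ^ (k + 1) • ⊤ := by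
        calc I • (⊤ : Submodule R M) ≤ I • (p ⊔ I ^ k • ⊤) := Submodule.smul_mono le_rfl ih
          _ = I • p ⊔ I • (I ^ k • ⊤) := Submodule.smul_sup _ _ _
          _ ≤ p ⊔ I ^ (k + 1) • ⊤ := by
            apply sup_le_sup Submodule.smul_le_right
            rw [← Submodule.smul_assoc, smul_eq_mul, ← pow_succ']
      calc (⊤ : Submodule R M) = p ⊔ I • ⊤ := h.symm
        _ ≤ p ⊔ (p ⊔ I ^ (k + 1) • ⊤) := sup_le_sup le_rfl this
        _ = p ⊔ I ^ (k + 1) • ⊤ := by rw [← sup_assoc, sup_idem]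
  have hp := key n
  rw [hn] at hp
  exact top_le_iff.mp (by simpa using hp)

end Aux

lemma stmt8.injective_of_ker_le {R : Type*} [CommRing R] {I : Ideal R}
    (hI : IsNilpotent I) {F M : Type*} [AddCommGroup F] [Module R F]
    [AddCommGroup M] [Module R M] (φ : F →ₗ[R] M)
    (hsurj : Function.Surjective φ)
    (hinj : Function.Injective (stmt8.mulMap I M))
    (hker : LinearMap.ker φ ≤ I • (⊤ : Submodule R F)) :
    Function.Injective φ := by
  set K := LinearMap.ker φ with hK
  have hexact : Function.Exact (LinearMap.lTensor I K.subtype) (LinearMap.lTensor I φ) :=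
    lTensor_exact ↥I (LinearMap.exact_subtype_ker_map φ) hsurj
  have hKle : (⊤ : Submodule R K) ≤ I • ⊤ := by
    intro x _
    have hxF : (x : F) ∈ LinearMap.range (stmt8.mulMap I F) := by
      rw [stmt8.mulMap_range]
      exact hker x.2
    obtain ⟨s, hs⟩ := hxF
    have h1 : stmt8.mulMap I M (LinearMap.lTensor I φ s) = 0 := by
      have hnat := congrArg (fun f => f s) (stmt8.mulMap_natural I φ)
      simp only [LinearMap.coe_comp, Function.comp_apply] at hnat
      rw [hnat, hs]
      exact LinearMap.mem_ker.mp x.2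
    have h2 : LinearMap.lTensor I φ s = 0 := hinj (by simpa using h1)
    obtain ⟨u, hu⟩ := (hexact s).mp h2
    have h3 : (x : F) = K.subtype (stmt8.mulMap I K u) := by
      have hnat := congrArg (fun f => f u) (stmt8.mulMap_natural I K.subtype)
      simp only [LinearMap.coe_comp, Function.comp_apply] at hnat
      rw [← hnat, hu, hs]
    have h4 : x = stmt8.mulMap I K u := Subtype.ext h3
    have h5 : stmt8.mulMap I K u ∈ LinearMap.range (stmt8.mulMap I K) := ⟨u, rfl⟩
    rw [stmt8.mulMap_range] at h5
    exact h4 ▸ h5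
  have hKbot : (⊤ : Submodule R K) = ⊥ := stmt8.nak_bot I hI ⊤ hKle
  rw [← LinearMap.ker_eq_bot, ← hK, eq_bot_iff]
  intro n hn
  have hmem : (⟨n, hn⟩ : K) ∈ (⊤ : Submodule R K) := Submodule.mem_top
  rw [hKbot, Submodule.mem_bot] at hmem
  simpa [Submodule.mem_bot] using congrArg Subtype.val hmem


set_option maxHeartbeats 1000000 in
/-- Local flatness criterion: over a local ring `(R, 𝔪)` with `𝔪` nilpotent, a module `M`
is flat iff the multiplication map `𝔪 ⊗[R] M → M` is injective. -/
theorem stmt8 {R M : Type*} [CommRing R] [IsLocalRing R]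
    (hm : IsNilpotent (IsLocalRing.maximalIdeal R))
    [AddCommGroup M] [Module R M] :
    Module.Flat R M ↔
      Function.Injective
        (TensorProduct.lift
          ((LinearMap.lsmul R M).comp (IsLocalRing.maximalIdeal R).subtype)) := by
  set I := IsLocalRing.maximalIdeal R with hIdef
  haveI : I.IsMaximal := IsLocalRing.maximalIdeal.isMaximal R
  letI : Field (R ⧸ I) := Ideal.Quotient.field I
  constructor
  · intro hf
    have h1 := (Module.Flat.iff_rTensor_injective' (R := R) (M := M)).mp hf I
    rw [← LinearMap.lid_comp_rTensor (M := M) I.subtype]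
    rw [LinearMap.coe_comp]
    exact (TensorProduct.lid R M).injective.comp h1
  · intro hinj
    -- residue field and quotient module
    let b : Module.Basis (Module.Basis.ofVectorSpaceIndex (R ⧸ I) (M ⧸ (I • ⊤ : Submodule R M)))
        (R ⧸ I) (M ⧸ (I • ⊤ : Submodule R M)) :=
      Module.Basis.ofVectorSpace (R ⧸ I) (M ⧸ (I • ⊤ : Submodule R M))
    set ι := Module.Basis.ofVectorSpaceIndex (R ⧸ I) (M ⧸ (I • ⊤ : Submodule R M)) with hι
    -- lift the basis to M
    have hlift : ∀ i : ι, ∃ x : M, Submodule.Quotient.mk x = b i := fun i =>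
      Submodule.Quotient.mk_surjective _ (b i)
    choose m hm' using hlift
    let φ : (ι →₀ R) →ₗ[R] M := Finsupp.linearCombination R m
    -- `mkQ ∘ φ` in terms of the basis
    have hcomm : ∀ x : ι →₀ R,
        (Submodule.Quotient.mk (p := (I • ⊤ : Submodule R M)) (φ x)) =
          Finsupp.linearCombination (R ⧸ I) b
            (x.mapRange (Ideal.Quotient.mk I) (map_zero _)) := by
      intro x
      induction x using Finsupp.induction_linear with
      | zero => simp [φ]
      | add f g hf hg =>
        rw [map_add, Finsupp.mapRange_add (by simp), map_add, ← hf, ← hg,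
          Submodule.Quotient.mk_add]
      | single a r =>
        rw [Finsupp.mapRange_single]
        simp only [φ, Finsupp.linearCombination_single]
        rw [← hm' a]
        rfl
    -- surjectivity of φ
    have hsurj : Function.Surjective φ := by
      rw [← LinearMap.range_eq_top]
      apply stmt8.nak_top I hm
      rw [eq_top_iff]
      intro x _
      set c := b.repr (Submodule.Quotient.mk (p := (I • ⊤ : Submodule R M)) x) with hc
      have hrep : ∀ i, ∃ r : R, Ideal.Quotient.mk I r = c i := fun i =>
        Ideal.Quotient.mk_surjective (c i)
      choose r hr using hrep
      set y : M := c.support.sum fun i => r i • m i with hy'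
      have hy : y ∈ LinearMap.range φ := by
        refine ⟨c.support.sum fun i => Finsupp.single i (r i), ?_⟩
        rw [map_sum]
        exact Finset.sum_congr rfl fun i _ => by simp [φ]
      have hyc : (Submodule.Quotient.mk (p := (I • ⊤ : Submodule R M)) y) =
          Finsupp.linearCombination (R ⧸ I) b c := by
        rw [hy', ← Submodule.mkQ_apply, map_sum, Finsupp.linearCombination_apply,
          Finsupp.sum]
        refine Finset.sum_congr rfl fun i _ => ?_
        rw [Submodule.mkQ_apply, ← hr i, ← hm' i]
        rfl
      have hxq : Finsupp.linearCombination (R ⧸ I) b c =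
          Submodule.Quotient.mk (p := (I • ⊤ : Submodule R M)) x :=
        b.linearCombination_repr _
      have hxy : x - y ∈ I • (⊤ : Submodule R M) := by
        rw [← Submodule.Quotient.mk_eq_zero, Submodule.Quotient.mk_sub, hyc, hxq,
          sub_self]
      have hxdecomp : x = (x - y) + y := (sub_add_cancel x y).symm
      rw [hxdecomp]
      exact Submodule.add_mem _ (Submodule.mem_sup_right hxy)
        (Submodule.mem_sup_left hy)
    -- the kernel is contained in I • ⊤
    have hker : LinearMap.ker φ ≤ I • (⊤ : Submodule R (ι →₀ R)) := by
      intro x hx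
      have h0 : Finsupp.linearCombination (R ⧸ I) b
          (x.mapRange (Ideal.Quotient.mk I) (map_zero _)) = 0 := by
        rw [← hcomm x, LinearMap.mem_ker.mp hx, Submodule.Quotient.mk_zero]
      have hc0 : x.mapRange (Ideal.Quotient.mk I) (map_zero _) = 0 := by
        have hli := b.linearIndependent
        rw [linearIndependent_iff] at hli
        exact hli _ h0
      have hmem : ∀ i, x i ∈ I := by
        intro i
        have : Ideal.Quotient.mk I (x i) = 0 := by
          have := congrArg (fun f => f i) hc0
          simpa using this
        exact Ideal.Quotient.eq_zero_iff_mem.mp this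
      rw [← Finsupp.sum_single x, Finsupp.sum]
      apply Submodule.sum_mem
      intro i _
      have hsingle : Finsupp.single i (x i) = x i • Finsupp.single i (1 : R) := by
        rw [Finsupp.smul_single, smul_eq_mul, mul_one]
      rw [hsingle]
      exact Submodule.smul_mem_smul (hmem i) Submodule.mem_top
    have hinj' : Function.Injective φ :=
      stmt8.injective_of_ker_le hm φ hsurj hinj hker
    exact Module.Flat.of_linearEquiv
      (LinearEquiv.ofBijective φ ⟨hinj', hsurj⟩).symm
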